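/- (Equivalence of problems (15) and (21), second direction) Let (W_1,…,W_N, Q) be feasible for problem (15) and suppose t := Σ_{n=1}^N R^SEC_{u,n} > 0. Then R^SEC_{u,n} = φ_n t for every n, the triple (W_1,…,W_N, Q, t) is feasible for problem (21) with constraint (20) holding with equality for every n, and t/P^TOT(W_1,…,W_N,Q) = SEE(W_1,…,W_N,Q). -/

import Mathlib

open Matrix
open scoped ComplexOrder

/-- Real part of `Tr(A B)`. -/
noncomputable def trR {n : ℕ} (A B : Matrix (Fin n) (Fin n) ℂ) : ℝ :=
  (Matrix.trace (A * B)).re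

/-- Euclidean (Frobenius) norm on ℂ^{N_t}. -/
noncomputable def euclNorm {n : ℕ} (v : Fin n → ℂ) : ℝ :=
  Real.sqrt (∑ i, ‖v i‖ ^ 2)

/-- Outer product channel matrix `H_n = h_n h_nᴴ`. -/
noncomputable def Hmat {N Nt : ℕ} (h : Fin N → Fin Nt → ℂ) (n : Fin N) :
    Matrix (Fin Nt) (Fin Nt) ℂ :=
  Matrix.vecMulVec (h n) (star (h n))

/-- Data rate `R_{u,n}` of user `n`. -/
noncomputable def Ru {N Nt : ℕ} (h : Fin N → Fin Nt → ℂ) (σsq : Fin N → ℝ) (BW : ℝ)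
    (W : Fin N → Matrix (Fin Nt) (Fin Nt) ℂ) (Q : Matrix (Fin Nt) (Fin Nt) ℂ)
    (n : Fin N) : ℝ :=
  BW * Real.log (1 + trR (Hmat h n) (W n) /
    ((∑ k ∈ Finset.univ.erase n, trR (Hmat h n) (W k)) + trR (Hmat h n) Q + σsq n))

/-- Secrecy rate `R^SEC_{u,n}` of user `n`. -/
noncomputable def Rsec {N Nt : ℕ} (h : Fin N → Fin Nt → ℂ) (σsq : Fin N → ℝ) (BW : ℝ)
    (Rreq : Fin N → ℝ) (W : Fin N → Matrix (Fin Nt) (Fin Nt) ℂ)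
    (Q : Matrix (Fin Nt) (Fin Nt) ℂ) (n : Fin N) : ℝ :=
  max (Ru h σsq BW W Q n - Rreq n) 0

/-- Total power consumption `P^TOT`. -/
noncomputable def Ptot {N Nt : ℕ} (φamp Pcir : ℝ)
    (W : Fin N → Matrix (Fin Nt) (Fin Nt) ℂ) (Q : Matrix (Fin Nt) (Fin Nt) ℂ) : ℝ :=
  (1 / φamp) * ((∑ n, (Matrix.trace (W n)).re) + (Matrix.trace Q).re) + Pcir

/-- Secrecy energy efficiency `SEE`. -/
noncomputable def SEE {N Nt : ℕ} (h : Fin N → Fin Nt → ℂ) (σsq : Fin N → ℝ) (BW : ℝ)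
    (Rreq : Fin N → ℝ) (φamp Pcir : ℝ)
    (W : Fin N → Matrix (Fin Nt) (Fin Nt) ℂ) (Q : Matrix (Fin Nt) (Fin Nt) ℂ) : ℝ :=
  (∑ n, Rsec h σsq BW Rreq W Q n) / Ptot φamp Pcir W Q

/-- The robust information-leakage constraint for all pairs `(m, n)`. -/
def LeakOK {N Nt M : ℕ} (BW : ℝ) (Rreq : Fin N → ℝ)
    (ge : Fin M → Fin Nt → ℂ) (Θe σe : Fin M → ℝ)
    (W : Fin N → Matrix (Fin Nt) (Fin Nt) ℂ) (Q : Matrix (Fin Nt) (Fin Nt) ℂ) : Prop :=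
  ∀ m n, ∀ Δ : Fin Nt → ℂ, euclNorm Δ ≤ Θe m →
    (star (ge m + Δ) ⬝ᵥ
      (((1 / (1 - Real.exp (-(Rreq n / BW))) : ℝ) : ℂ) • W n - (∑ k, W k) - Q).mulVec
        (ge m + Δ)).re ≤ σe m

/-- The robust energy-harvesting constraint for all `i`. -/
def EHOK {Nt I : ℕ} (gh : Fin I → Fin Nt → ℂ) (Θh Preq ξ : Fin I → ℝ)
    {N : ℕ} (W : Fin N → Matrix (Fin Nt) (Fin Nt) ℂ)
    (Q : Matrix (Fin Nt) (Fin Nt) ℂ) : Prop :=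
  ∀ i, ∀ Δ : Fin Nt → ℂ, euclNorm Δ ≤ Θh i →
    Preq i / ξ i ≤ (star (gh i + Δ) ⬝ᵥ ((∑ k, W k) + Q).mulVec (gh i + Δ)).re

/-- Feasibility for problem (15). -/
noncomputable def Feasible15 {N Nt M I : ℕ}
    (h : Fin N → Fin Nt → ℂ) (σsq : Fin N → ℝ) (BW : ℝ) (φv Rreq : Fin N → ℝ)
    (ge : Fin M → Fin Nt → ℂ) (Θe σe : Fin M → ℝ)
    (gh : Fin I → Fin Nt → ℂ) (Θh Preq ξ : Fin I → ℝ) (Pmax : ℝ)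
    (W : Fin N → Matrix (Fin Nt) (Fin Nt) ℂ) (Q : Matrix (Fin Nt) (Fin Nt) ℂ) : Prop :=
  (∀ n, (W n).PosSemidef) ∧ Q.PosSemidef ∧
  (∀ n, (W n).rank ≤ 1) ∧
  (∀ m n, φv m * Rsec h σsq BW Rreq W Q n = φv n * Rsec h σsq BW Rreq W Q m) ∧
  LeakOK BW Rreq ge Θe σe W Q ∧
  EHOK gh Θh Preq ξ W Q ∧
  (∑ n, (Matrix.trace (W n)).re) + (Matrix.trace Q).re ≤ Pmax

/-- Feasibility for problem (21). -/
noncomputable def Feasible21 {N Nt M I : ℕ}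
    (h : Fin N → Fin Nt → ℂ) (σsq : Fin N → ℝ) (BW : ℝ) (φv Rreq : Fin N → ℝ)
    (ge : Fin M → Fin Nt → ℂ) (Θe σe : Fin M → ℝ)
    (gh : Fin I → Fin Nt → ℂ) (Θh Preq ξ : Fin I → ℝ) (Pmax : ℝ)
    (W : Fin N → Matrix (Fin Nt) (Fin Nt) ℂ) (Q : Matrix (Fin Nt) (Fin Nt) ℂ)
    (t : ℝ) : Prop :=
  (∀ n, (W n).PosSemidef) ∧ Q.PosSemidef ∧
  (∀ n, (W n).rank ≤ 1) ∧
  (∀ n, ((1 + (Real.exp (φv n * t / BW + Rreq n / BW) - 1)) /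
        (Real.exp (φv n * t / BW + Rreq n / BW) - 1)) * trR (Hmat h n) (W n) ≥
      (∑ k, trR (Hmat h n) (W k)) + trR (Hmat h n) Q + σsq n) ∧
  LeakOK BW Rreq ge Θe σe W Q ∧
  EHOK gh Θh Preq ξ W Q ∧
  (∑ n, (Matrix.trace (W n)).re) + (Matrix.trace Q).re ≤ Pmax


lemma trR_nonneg' {Nt : ℕ} (v : Fin Nt → ℂ) {B : Matrix (Fin Nt) (Fin Nt) ℂ}
    (hB : B.PosSemidef) : 0 ≤ trR (Matrix.vecMulVec v (star v)) B := by
  have htr : Matrix.trace (Matrix.vecMulVec v (star v) * B)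
      = star v ⬝ᵥ B.mulVec v := by
    simp only [Matrix.trace, Matrix.diag, Matrix.mul_apply, Matrix.vecMulVec_apply,
      dotProduct, Matrix.mulVec_apply, Matrix.row_apply, Pi.star_apply]
    rw [Finset.sum_comm]
    congr 1; ext j; rw [Finset.mul_sum]; congr 1; ext i; ring
  have h0 := hB.dotProduct_mulVec_nonneg v
  rw [Complex.le_def] at h0
  simpa [trR, htr] using h0.1

lemma aux20 (S D BW c : ℝ) (hS : 0 ≤ S) (hD : 0 < D) (hBW : 0 < BW) (hc : 0 < c)
    (hRu : BW * Real.log (1 + S / D) = c) :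
    ((1 + (Real.exp (c / BW) - 1)) / (Real.exp (c / BW) - 1)) * S = S + D := by
  have hx : (0 : ℝ) < 1 + S / D := by positivity
  have hlog : Real.log (1 + S / D) = c / BW := by
    rw [eq_div_iff hBW.ne']; linarith
  have hxe : 1 + S / D = Real.exp (c / BW) := by rw [← hlog, Real.exp_log hx]
  have hθ : Real.exp (c / BW) - 1 = S / D := by linarith
  have hθpos : 0 < S / D := by
    have h1 : (1 : ℝ) < Real.exp (c / BW) := by
      calc (1 : ℝ) = Real.exp 0 := Real.exp_zero.symm
        _ < Real.exp (c / BW) := Real.exp_lt_exp.2 (by positivity)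
    linarith
  have hSpos : 0 < S := by
    have hSe : S = (S / D) * D := (div_mul_cancel₀ S hD.ne').symm
    rw [hSe]; exact mul_pos hθpos hD
  rw [hθ]
  field_simp
  ring

set_option maxHeartbeats 1000000 in
/-- Equivalence of problems (15) and (21), second direction: a feasible point of (15)
with positive sum secrecy rate `t` has secrecy rates exactly `φ_n t`, is feasible for (21)
at `t` with constraint (20) active for every `n`, and satisfies `t / P^TOT = SEE`. -/
theorem equiv_15_21_second_direction {N Nt M I : ℕ} (hN : 0 < N) (hNt : 0 < Nt)
    (h : Fin N → Fin Nt → ℂ) (σsq : Fin N → ℝ) (hσ : ∀ n, 0 < σsq n)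
    (BW : ℝ) (hBW : 0 < BW)
    (φv : Fin N → ℝ) (hφ : ∀ n, 0 < φv n) (hφsum : ∑ n, φv n = 1)
    (Rreq : Fin N → ℝ) (hRreq : ∀ n, 0 < Rreq n)
    (ge : Fin M → Fin Nt → ℂ) (Θe : Fin M → ℝ) (hΘe : ∀ m, 0 < Θe m)
    (σe : Fin M → ℝ) (hσe : ∀ m, 0 < σe m)
    (gh : Fin I → Fin Nt → ℂ) (Θh : Fin I → ℝ) (hΘh : ∀ i, 0 < Θh i)
    (Preq : Fin I → ℝ) (hPreq : ∀ i, 0 < Preq i)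
    (ξ : Fin I → ℝ) (hξ : ∀ i, 0 < ξ i ∧ ξ i ≤ 1)
    (Pmax : ℝ) (hPmax : 0 < Pmax)
    (φamp : ℝ) (hφamp : 0 < φamp ∧ φamp ≤ 1) (Pcir : ℝ) (hPcir : 0 < Pcir)
    (W : Fin N → Matrix (Fin Nt) (Fin Nt) ℂ) (Q : Matrix (Fin Nt) (Fin Nt) ℂ)
    (hfeas : Feasible15 h σsq BW φv Rreq ge Θe σe gh Θh Preq ξ Pmax W Q)
    (t : ℝ) (htdef : t = ∑ n, Rsec h σsq BW Rreq W Q n) (htpos : 0 < t) :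
    (∀ n, Rsec h σsq BW Rreq W Q n = φv n * t) ∧
    Feasible21 h σsq BW φv Rreq ge Θe σe gh Θh Preq ξ Pmax W Q t ∧
    (∀ n, ((1 + (Real.exp (φv n * t / BW + Rreq n / BW) - 1)) /
        (Real.exp (φv n * t / BW + Rreq n / BW) - 1)) * trR (Hmat h n) (W n) =
      (∑ k, trR (Hmat h n) (W k)) + trR (Hmat h n) Q + σsq n) ∧
    t / Ptot φamp Pcir W Q = SEE h σsq BW Rreq φamp Pcir W Q := by
  obtain ⟨hW, hQ, hrank, hprop, hleak, heh, hpow⟩ := hfeas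
  have hR : ∀ n, Rsec h σsq BW Rreq W Q n = φv n * t := by
    intro n
    have hsum : ∑ m, φv m * Rsec h σsq BW Rreq W Q n
        = ∑ m, φv n * Rsec h σsq BW Rreq W Q m :=
      Finset.sum_congr rfl fun m _ => hprop m n
    rw [← Finset.sum_mul, hφsum, one_mul, ← Finset.mul_sum, ← htdef] at hsum
    exact hsum
  have hEq : ∀ n, ((1 + (Real.exp (φv n * t / BW + Rreq n / BW) - 1)) /
        (Real.exp (φv n * t / BW + Rreq n / BW) - 1)) * trR (Hmat h n) (W n) =
      (∑ k, trR (Hmat h n) (W k)) + trR (Hmat h n) Q + σsq n := by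
    intro n
    have hSnn : 0 ≤ trR (Hmat h n) (W n) := trR_nonneg' (h n) (hW n)
    have hDpos : 0 < (∑ k ∈ Finset.univ.erase n, trR (Hmat h n) (W k)) +
        trR (Hmat h n) Q + σsq n := by
      have h1 : 0 ≤ ∑ k ∈ Finset.univ.erase n, trR (Hmat h n) (W k) :=
        Finset.sum_nonneg fun k _ => trR_nonneg' (h n) (hW k)
      have h2 : 0 ≤ trR (Hmat h n) Q := trR_nonneg' (h n) hQ
      have := hσ n; positivity
    have hRsec := hR n
    have hRpos : 0 < φv n * t := mul_pos (hφ n) htpos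
    have hRu : Ru h σsq BW W Q n = φv n * t + Rreq n := by
      have hstep : Ru h σsq BW W Q n - Rreq n = φv n * t := by
        rcases le_or_gt (Ru h σsq BW W Q n - Rreq n) 0 with hc | hc
        · rw [Rsec, max_eq_right hc] at hRsec; linarith
        · rw [Rsec, max_eq_left hc.le] at hRsec; exact hRsec
      linarith
    rw [Ru] at hRu
    have hexp : φv n * t / BW + Rreq n / BW = (φv n * t + Rreq n) / BW := by ring
    rw [hexp]
    have key := aux20 (trR (Hmat h n) (W n))
      ((∑ k ∈ Finset.univ.erase n, trR (Hmat h n) (W k)) +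
        trR (Hmat h n) Q + σsq n) BW (φv n * t + Rreq n)
      hSnn hDpos hBW (by have := hRreq n; linarith) hRu
    have hsplit : (∑ k, trR (Hmat h n) (W k)) = trR (Hmat h n) (W n) +
        ∑ k ∈ Finset.univ.erase n, trR (Hmat h n) (W k) :=
      (Finset.add_sum_erase _ _ (Finset.mem_univ n)).symm
    rw [hsplit]; linarith
  refine ⟨hR, ⟨hW, hQ, hrank, fun n => (hEq n).ge, hleak, heh, hpow⟩, hEq, ?_⟩
  rw [SEE, htdef]
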